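/- arXiv:1912.02306 — 2 statements merged into one kernel-verified Lean document; each statement's English description precedes it below -/
import Mathlib

section
/- Let ∗ be a finite character star-operation on an integral domain D and let {a_α} be a family of nonzero elements of D. If ({a_α})_∗ is ∗-invertible, then for every positive integer n, ({a_α^n})_∗ = (({a_α})^n)_∗. -/
open FractionalIdeal

variable (D : Type*) (K : Type*) [CommRing D] [IsDomain D] [Field K] [Algebra D K]
  [IsFractionRing D K]

/-- A finite character star-operation on the integral domain `D`, acting on the
nonzero fractional ideals of `D` inside its quotient field `K`. -/
structure StarOperation where
  star : FractionalIdeal (nonZeroDivisors D) K → FractionalIdeal (nonZeroDivisors D) K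
  star_principal : ∀ x : K, x ≠ 0 →
    star (spanSingleton (nonZeroDivisors D) x) = spanSingleton (nonZeroDivisors D) x
  star_smul : ∀ (x : K) (A : FractionalIdeal (nonZeroDivisors D) K), x ≠ 0 → A ≠ 0 →
    star (spanSingleton (nonZeroDivisors D) x * A) = spanSingleton (nonZeroDivisors D) x * star A
  le_star : ∀ A, A ≠ 0 → A ≤ star A
  star_mono : ∀ A B, A ≠ 0 → B ≠ 0 → A ≤ B → star A ≤ star B
  star_star : ∀ A, A ≠ 0 → star (star A) = star A
  finite_character : ∀ A, A ≠ 0 → ∀ x ∈ star A,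
    ∃ B : FractionalIdeal (nonZeroDivisors D) K,
      B ≠ 0 ∧ B ≤ A ∧ (B : Submodule D K).FG ∧ x ∈ star B

/-- A prime ideal of height one: a nonzero prime with no nonzero prime strictly below it. -/
def HeightOnePrime (P : Ideal D) : Prop :=
  P.IsPrime ∧ P ≠ ⊥ ∧ ∀ Q : Ideal D, Q.IsPrime → Q < P → Q = ⊥

/-- Membership of `x : K` in the localization `D_P` viewed inside `K`. -/
def MemLocAt (P : Ideal D) (x : K) : Prop :=
  ∃ a t : D, t ∉ P ∧ x * algebraMap D K t = algebraMap D K a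

/-- An almost valuation ring: for nonzero `a, b` some power `a^n` divides `b^n` or
conversely. -/
def AVRing (R : Type*) [CommRing R] : Prop :=
  ∀ a b : R, a ≠ 0 → b ≠ 0 → ∃ n : ℕ, 0 < n ∧ (a ^ n ∣ b ^ n ∨ b ^ n ∣ a ^ n)

/-- The `v`-operation `A ↦ (A⁻¹)⁻¹` on fractional ideals. -/
noncomputable def vOp (A : FractionalIdeal (nonZeroDivisors D) K) : FractionalIdeal (nonZeroDivisors D) K :=
  (A⁻¹)⁻¹

/-- An integral ideal is a `t`-ideal if it contains `B_v` for every nonzero finitely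
generated subideal `B`. -/
def IsTIdeal (I : Ideal D) : Prop :=
  ∀ B : Ideal D, B ≠ ⊥ → B.FG → B ≤ I →
    vOp D K (B : FractionalIdeal (nonZeroDivisors D) K) ≤ (I : FractionalIdeal (nonZeroDivisors D) K)

/-- Maximal `t`-ideals. -/
def IsTMax (P : Ideal D) : Prop :=
  P ≠ ⊥ ∧ P ≠ ⊤ ∧ IsTIdeal D K P ∧
    ∀ J : Ideal D, J ≠ ⊤ → IsTIdeal D K J → P ≤ J → J = P

/-- An integral ideal is a `w`-ideal if it contains every `x ∈ K` with `xJ ⊆ I` for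
some finitely generated ideal `J` with `J⁻¹ = D`. -/
def IsWIdeal (I : Ideal D) : Prop :=
  ∀ x : K, (∃ J : Ideal D, J.FG ∧ ((J : FractionalIdeal (nonZeroDivisors D) K))⁻¹ = 1 ∧
      spanSingleton (nonZeroDivisors D) x * (J : FractionalIdeal (nonZeroDivisors D) K) ≤
        (I : FractionalIdeal (nonZeroDivisors D) K)) →
    x ∈ (I : FractionalIdeal (nonZeroDivisors D) K)

/-- Maximal `w`-ideals. -/
def IsWMax (P : Ideal D) : Prop :=
  P ≠ ⊥ ∧ P ≠ ⊤ ∧ IsWIdeal D K P ∧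
    ∀ J : Ideal D, J ≠ ⊤ → IsWIdeal D K J → P ≤ J → J = P

/-- `P ∈ Ass(K/D)`: `P` is a prime minimal over a conductor ideal `(aD : bD)`. -/
def InAssKD (P : Ideal D) : Prop :=
  P.IsPrime ∧ ∃ a b : D, a ≠ 0 ∧ b ≠ 0 ∧
    (Ideal.span {a}).colon (Ideal.span {b}) ≤ P ∧
    ∀ Q : Ideal D, Q.IsPrime → (Ideal.span {a}).colon (Ideal.span {b}) ≤ Q → Q ≤ P → Q = P

/-- An AGCD (almost GCD) domain: for all nonzero `a, b` there is `n ≥ 1` with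
`(aⁿ, bⁿ)_v` principal. -/
def IsAGCDDomain : Prop :=
  ∀ a b : D, a ≠ 0 → b ≠ 0 → ∃ n : ℕ, 0 < n ∧ ∃ d : D,
    vOp D K ((Ideal.span {a ^ n, b ^ n} : Ideal D) : FractionalIdeal (nonZeroDivisors D) K) =
      spanSingleton (nonZeroDivisors D) (algebraMap D K d)

/-- `D_P` is an almost valuation domain, for `P` a prime of `D`. -/
def AVAtPrime {D : Type*} [CommRing D] (P : Ideal D) (hP : P.IsPrime) : Prop :=
  AVRing (Localization (@Ideal.primeCompl D _ P hP))

namespace StarOperation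

variable {D K}
variable (s : StarOperation D K)

/-- The star closure of an integral ideal, as an integral ideal. -/
def starI (I : Ideal D) : Ideal D :=
  (s.star (I : FractionalIdeal (nonZeroDivisors D) K) : Submodule D K).comap
    (Algebra.linearMap D K)

/-- An integral `∗`-ideal. -/
def IsStarIdeal (I : Ideal D) : Prop :=
  s.star (I : FractionalIdeal (nonZeroDivisors D) K) = (I : FractionalIdeal (nonZeroDivisors D) K)

/-- A maximal `∗`-ideal: maximal among proper integral `∗`-ideals (such ideals are prime). -/
def IsMaxStarIdeal (P : Ideal D) : Prop :=
  P ≠ ⊥ ∧ P ≠ ⊤ ∧ P.IsPrime ∧ s.IsStarIdeal P ∧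
    ∀ J : Ideal D, J ≠ ⊤ → s.IsStarIdeal J → P ≤ J → J = P

/-- `∗`-invertibility of a fractional ideal. -/
def IsStarInvertible (A : FractionalIdeal (nonZeroDivisors D) K) : Prop :=
  s.star (A * A⁻¹) = 1

/-- `∗`-invertibility of an integral ideal. -/
def IsStarInvertibleI (I : Ideal D) : Prop :=
  s.IsStarInvertible (I : FractionalIdeal (nonZeroDivisors D) K)

/-- A `P`-`∗`-homogeneous ideal: nonzero, finitely generated, contained in the maximal
`∗`-ideal `P` and in no other maximal `∗`-ideal. -/
def IsHomogeneous (P I : Ideal D) : Prop :=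
  I ≠ ⊥ ∧ I.FG ∧ s.IsMaxStarIdeal P ∧ I ≤ P ∧
    ∀ Q : Ideal D, s.IsMaxStarIdeal Q → I ≤ Q → Q = P

/-- A type 1 `∗`-homogeneous ideal: `M(A) = √(A_∗)`. -/
def IsType1 (P I : Ideal D) : Prop := P = (s.starI I).radical

/-- A type 2 `∗`-homogeneous ideal: `A_∗ = (M(A)ⁿ)_∗` for some `n ≥ 1`. -/
def IsType2 (P I : Ideal D) : Prop :=
  ∃ n : ℕ, 0 < n ∧
    s.star (I : FractionalIdeal (nonZeroDivisors D) K) =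
      s.star ((P ^ n : Ideal D) : FractionalIdeal (nonZeroDivisors D) K)

/-- A `P`-`∗`-almost super-homogeneous ideal. -/
def IsAlmostSuperHomogeneous (P I : Ideal D) : Prop :=
  s.IsStarInvertibleI I ∧ s.IsHomogeneous P I ∧
    ∀ (k : ℕ) (b : Fin k → D), (∀ i, b i ∈ P) →
      (∃ r : ℕ, 0 < r ∧ ((I ^ r : Ideal D) : FractionalIdeal (nonZeroDivisors D) K) ≤
        s.star ((Ideal.span (Set.range b) : Ideal D) : FractionalIdeal (nonZeroDivisors D) K)) →
      ∃ n : ℕ, 0 < n ∧ s.IsStarInvertibleI (Ideal.span (Set.range fun i => b i ^ n))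

/-- A `∗`-super-homogeneous ideal: every `∗`-homogeneous ideal containing it is
`∗`-invertible. -/
def IsSuperHomogeneous (P I : Ideal D) : Prop :=
  s.IsHomogeneous P I ∧
    ∀ B Q : Ideal D, s.IsHomogeneous Q B → I ≤ B → s.IsStarInvertibleI B

/-- A `P`-`∗`-afg-homogeneous (almost factorial general homogeneous) ideal. -/
def IsAfgHomogeneous (P I : Ideal D) : Prop :=
  s.IsStarInvertibleI I ∧ s.IsHomogeneous P I ∧
    ∀ (k : ℕ) (b : Fin k → D), (∀ i, b i ∈ P) →
      (∃ r : ℕ, 0 < r ∧ ((I ^ r : Ideal D) : FractionalIdeal (nonZeroDivisors D) K) ≤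
        s.star ((Ideal.span (Set.range b) : Ideal D) : FractionalIdeal (nonZeroDivisors D) K)) →
      ∃ n : ℕ, 0 < n ∧ ∃ d : D,
        s.star ((Ideal.span (Set.range fun i => b i ^ n) : Ideal D) :
            FractionalIdeal (nonZeroDivisors D) K) =
          spanSingleton (nonZeroDivisors D) (algebraMap D K d)

/-- A `∗`-af-homogeneous ideal: every `∗`-homogeneous ideal containing it has a power
whose `∗`-closure is principal. -/
def IsAfHomogeneous (P I : Ideal D) : Prop :=
  s.IsHomogeneous P I ∧
    ∀ B Q : Ideal D, s.IsHomogeneous Q B → I ≤ B →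
      ∃ n : ℕ, 0 < n ∧ ∃ d : D,
        s.star ((B ^ n : Ideal D) : FractionalIdeal (nonZeroDivisors D) K) =
          spanSingleton (nonZeroDivisors D) (algebraMap D K d)

/-- `D` is a `∗`-SH domain with respect to a property of ideals: every nonzero proper
principal ideal is a `∗`-product of ideals with the given property. -/
def IsSHWith (prop : Ideal D → Prop) : Prop :=
  ∀ x : D, x ≠ 0 → ¬IsUnit x →
    ∃ (k : ℕ) (A : Fin k → Ideal D), (∀ i, prop (A i)) ∧
      s.star ((∏ i, A i : Ideal D) : FractionalIdeal (nonZeroDivisors D) K) =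
        ((Ideal.span {x} : Ideal D) : FractionalIdeal (nonZeroDivisors D) K)

/-- A `∗`-almost super-SH domain. -/
def IsAlmostSuperSH : Prop :=
  s.IsSHWith fun I => ∃ P, s.IsAlmostSuperHomogeneous P I

/-- Finite character: every nonzero nonunit lies in only finitely many maximal
`∗`-ideals. -/
def FiniteCharacterDom : Prop :=
  ∀ x : D, x ≠ 0 → ¬IsUnit x → {P : Ideal D | s.IsMaxStarIdeal P ∧ x ∈ P}.Finite

/-- Independence: no two distinct maximal `∗`-ideals contain a common nonzero prime. -/
def IndependentDom : Prop :=
  ∀ P Q : Ideal D, s.IsMaxStarIdeal P → s.IsMaxStarIdeal Q → P ≠ Q →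
    ∀ L : Ideal D, L.IsPrime → L ≠ ⊥ → ¬(L ≤ P ∧ L ≤ Q)

/-- A `∗`-h-local domain. -/
def IsHLocal : Prop := s.FiniteCharacterDom ∧ s.IndependentDom

/-- A `∗`-almost independent ring of Krull type. -/
def IsAlmostIRKT : Prop :=
  s.IsHLocal ∧ ∀ (P : Ideal D) (h : s.IsMaxStarIdeal P), AVAtPrime P h.2.2.1

/-- A `∗`-almost generalized Krull domain. -/
def IsAGKD : Prop :=
  (∀ x : K, (∀ P : Ideal D, HeightOnePrime D P → MemLocAt D K P x) →
      ∃ d : D, algebraMap D K d = x) ∧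
  (∀ x : D, x ≠ 0 → ¬IsUnit x → {P : Ideal D | HeightOnePrime D P ∧ x ∈ P}.Finite) ∧
  (∀ P : Ideal D, s.IsMaxStarIdeal P ↔ HeightOnePrime D P) ∧
  (∀ (P : Ideal D) (h : s.IsMaxStarIdeal P), AVAtPrime P h.2.2.1)

/-- A `∗`-Krull domain: `∗`-h-local, `∗-Max(D) = X⁽¹⁾(D)`, and `D_P` is a DVR for each
maximal `∗`-ideal `P`. -/
def IsStarKrull : Prop :=
  s.IsHLocal ∧ (∀ P : Ideal D, s.IsMaxStarIdeal P ↔ HeightOnePrime D P) ∧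
    ∀ (P : Ideal D) (h : s.IsMaxStarIdeal P),
      @IsDiscreteValuationRing (Localization (@Ideal.primeCompl D _ P h.2.2.1)) _
        (IsLocalization.isDomain_localization (@Ideal.primeCompl_le_nonZeroDivisors D _ _ P h.2.2.1))

/-- A `∗`-almost Bézout domain. -/
def IsAlmostBezout : Prop :=
  ∀ a b : D, a ≠ 0 → b ≠ 0 → ∃ n : ℕ, 0 < n ∧ ∃ d : D,
    s.star ((Ideal.span {a ^ n, b ^ n} : Ideal D) : FractionalIdeal (nonZeroDivisors D) K) =
      spanSingleton (nonZeroDivisors D) (algebraMap D K d)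

/-- The `∗`-class group `Cl_∗(D)` is torsion: every `∗`-invertible fractional ideal has a
power whose `∗`-closure is principal. -/
def HasTorsionClassGroup : Prop :=
  ∀ A : FractionalIdeal (nonZeroDivisors D) K, A ≠ 0 → s.IsStarInvertible A →
    ∃ n : ℕ, 0 < n ∧ ∃ x : K, s.star (A ^ n) = spanSingleton (nonZeroDivisors D) x

end StarOperation

variable {D : Type*} {K : Type*} [CommRing D] [IsDomain D] [Field K] [Algebra D K]
  [IsFractionRing D K]

open StarOperation

section Helpers

variable {D : Type*} {K : Type*} [CommRing D] [IsDomain D] [Field K] [Algebra D K]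
  [IsFractionRing D K]

namespace StarHelper
set_option linter.unusedSectionVars false
set_option linter.unusedVariables false

open FractionalIdeal

local notation "FI" => FractionalIdeal (nonZeroDivisors D) K

lemma ex_ne_zero {A : FI} (hA : A ≠ 0) : ∃ x ∈ A, x ≠ (0 : K) := by
  by_contra h
  push_neg at h
  exact hA (FractionalIdeal.eq_zero_iff.mpr h)

lemma fmul_ne_zero {A B : FI} (hA : A ≠ 0) (hB : B ≠ 0) : A * B ≠ 0 := by
  obtain ⟨x, hx, hx0⟩ := ex_ne_zero hA
  obtain ⟨y, hy, hy0⟩ := ex_ne_zero hB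
  intro h
  exact mul_ne_zero hx0 hy0 (FractionalIdeal.eq_zero_iff.mp h (x * y) (mul_mem_mul hx hy))

lemma fpow_ne_zero {A : FI} (hA : A ≠ 0) : ∀ k : ℕ, A ^ k ≠ 0
  | 0 => by simp
  | k + 1 => by
    rw [pow_succ]
    exact fmul_ne_zero (fpow_ne_zero hA k) hA

lemma finv_ne_zero {A : FI} (hA : A ≠ 0) : A⁻¹ ≠ 0 := by
  obtain ⟨x, hx, hx0⟩ := ex_ne_zero hA
  obtain ⟨d, hd⟩ := A.isFractional
  intro h
  have hdx : (algebraMap D K d) ∈ A⁻¹ := by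
    rw [FractionalIdeal.mem_inv_iff hA]
    intro y hy
    obtain ⟨c, hc⟩ := hd.2 y hy
    rw [FractionalIdeal.mem_one_iff]
    exact ⟨c, by rw [hc, Algebra.smul_def]⟩
  have := FractionalIdeal.eq_zero_iff.mp h _ hdx
  exact IsFractionRing.to_map_ne_zero_of_mem_nonZeroDivisors hd.1 this

lemma fmul_mono {A B C E : FI} (h1 : A ≤ C) (h2 : B ≤ E) : A * B ≤ C * E :=
  FractionalIdeal.mul_le.mpr fun x hx y hy => mul_mem_mul (h1 hx) (h2 hy)

lemma fpow_le_one {A : FI} (h : A ≤ 1) : ∀ k : ℕ, A ^ k ≤ 1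
  | 0 => by simp
  | k + 1 => by
    rw [pow_succ]
    calc A ^ k * A ≤ 1 * 1 := fmul_mono (fpow_le_one h k) h
    _ = 1 := one_mul 1

variable (s : StarOperation D K)

lemma star_ne_zero {A : FI} (hA : A ≠ 0) : s.star A ≠ 0 := fun h =>
  hA (_root_.le_zero_iff.mp (h ▸ s.le_star A hA))

lemma star_one : s.star (1 : FI) = 1 := by
  have := s.star_principal (1 : K) one_ne_zero
  rwa [spanSingleton_one] at this

lemma star_mul_star {A B : FI} (hA : A ≠ 0) (hB : B ≠ 0) :
    s.star (s.star A * B) = s.star (A * B) := by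
  have hsA := star_ne_zero s hA
  have hAB := fmul_ne_zero hA hB
  have hsAB := fmul_ne_zero hsA hB
  refine le_antisymm ?_ (s.star_mono _ _ hAB hsAB (fmul_mono (s.le_star A hA) le_rfl))
  have h1 : s.star A * B ≤ s.star (A * B) := by
    refine FractionalIdeal.mul_le.mpr fun x hx y hy => ?_
    by_cases hy0 : y = 0
    · simpa [hy0] using (s.star (A * B)).zero_mem
    · have hyA0 : spanSingleton (nonZeroDivisors D) y * A ≠ 0 :=
        fmul_ne_zero (spanSingleton_ne_zero_iff.mpr hy0) hA
      have hmem : x * y ∈ s.star (spanSingleton (nonZeroDivisors D) y * A) := by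
        rw [s.star_smul y A hy0 hA, mul_comm x y]
        exact mul_mem_mul (mem_spanSingleton_self _ y) hx
      refine s.star_mono _ _ hyA0 hAB ?_ hmem
      calc spanSingleton (nonZeroDivisors D) y * A ≤ B * A :=
            fmul_mono (spanSingleton_le_iff_mem.mpr hy) le_rfl
        _ = A * B := mul_comm _ _
  calc s.star (s.star A * B) ≤ s.star (s.star (A * B)) :=
        s.star_mono _ _ hsAB (star_ne_zero s hAB) h1
    _ = s.star (A * B) := s.star_star _ hAB

lemma mul_star_star {A B : FI} (hA : A ≠ 0) (hB : B ≠ 0) :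
    s.star (A * s.star B) = s.star (A * B) := by
  rw [mul_comm A (s.star B), mul_comm A B]
  exact star_mul_star s hB hA

lemma star_pow_congr {A B : FI} (hA : A ≠ 0) (hB : B ≠ 0) (h : s.star A = s.star B) :
    ∀ k : ℕ, s.star (A ^ k) = s.star (B ^ k)
  | 0 => by rw [pow_zero, pow_zero]
  | k + 1 => by
    have hAk := fpow_ne_zero hA k
    have hBk := fpow_ne_zero hB k
    rw [pow_succ, pow_succ, ← star_mul_star s hAk hA, ← star_mul_star s hBk hB,
      star_pow_congr hA hB h k, ← mul_star_star s (star_ne_zero s hBk) hA,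
      ← mul_star_star s (star_ne_zero s hBk) hB, h]

lemma star_cancel {A C E : FI} (hA : A ≠ 0) (hC : C ≠ 0) (hE : E ≠ 0)
    (hinv : s.star (A * A⁻¹) = 1) (h : s.star (A * C) ≤ s.star (A * E)) :
    s.star C ≤ s.star E := by
  have hAi := finv_ne_zero hA
  have hAA := fmul_ne_zero hA hAi
  have key : ∀ X : FI, X ≠ 0 → s.star (A⁻¹ * s.star (A * X)) = s.star X := fun X hX => by
    rw [mul_star_star s hAi (fmul_ne_zero hA hX)]
    have : A⁻¹ * (A * X) = A * A⁻¹ * X := by ring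
    rw [this, ← star_mul_star s hAA hX, hinv, one_mul]
  calc s.star C = s.star (A⁻¹ * s.star (A * C)) := (key C hC).symm
    _ ≤ s.star (A⁻¹ * s.star (A * E)) := by
        refine s.star_mono _ _ ?_ ?_ (fmul_mono le_rfl h)
        · exact fmul_ne_zero hAi (star_ne_zero s (fmul_ne_zero hA hC))
        · exact fmul_ne_zero hAi (star_ne_zero s (fmul_ne_zero hA hE))
    _ = s.star E := key E hE

lemma star_inv_pow {F : FI} (hF : F ≠ 0) (hinv : s.star (F * F⁻¹) = 1) (N : ℕ) :
    s.star (F ^ N * (F ^ N)⁻¹) = 1 := by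
  rcases Nat.eq_zero_or_pos N with rfl | hN
  · rw [pow_zero, inv_one, one_mul, star_one]
  have hFN := fpow_ne_zero hF N
  have hFi := finv_ne_zero hF
  have hFNi := finv_ne_zero hFN
  have hle1 : F ^ N * (F ^ N)⁻¹ ≤ 1 := by
    rw [FractionalIdeal.inv_eq]
    exact FractionalIdeal.mul_one_div_le_one
  have hlow : (F * F⁻¹) ^ N ≤ F ^ N * (F ^ N)⁻¹ := by
    rw [mul_pow]
    refine fmul_mono le_rfl ?_
    show (F⁻¹) ^ N ≤ 1 / F ^ N
    rw [FractionalIdeal.le_div_iff_mul_le hFN]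
    calc (F⁻¹) ^ N * F ^ N = (F * F⁻¹) ^ N := by rw [mul_pow]; ring
      _ ≤ 1 := fpow_le_one (by rw [FractionalIdeal.inv_eq]; exact mul_one_div_le_one) N
  have hFFiN : (F * F⁻¹) ^ N ≠ 0 := fpow_ne_zero (fmul_ne_zero hF hFi) N
  have hFNFNi : F ^ N * (F ^ N)⁻¹ ≠ 0 := fmul_ne_zero hFN hFNi
  have h1 : s.star ((F * F⁻¹) ^ N) = 1 := by
    have := star_pow_congr s (fmul_ne_zero hF hFi) one_ne_zero
      (by rw [hinv, star_one]) N
    rwa [one_pow, star_one] at this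
  refine le_antisymm ?_ ?_
  · calc s.star (F ^ N * (F ^ N)⁻¹) ≤ s.star 1 :=
        s.star_mono _ _ hFNFNi one_ne_zero hle1
      _ = 1 := star_one s
  · calc (1 : FI) = s.star ((F * F⁻¹) ^ N) := h1.symm
      _ ≤ s.star (F ^ N * (F ^ N)⁻¹) := s.star_mono _ _ hFFiN hFNFNi hlow

lemma prod_mem_pow {α : Type*} (I : Ideal D) (T : Finset α) (g : α → D)
    (hg : ∀ i ∈ T, g i ∈ I) : ∏ i ∈ T, g i ∈ I ^ T.card := by
  classical
  induction T using Finset.induction_on with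
  | empty => simpa using Submodule.mem_top
  | insert x T' hnotmem ih =>
    rw [Finset.prod_insert hnotmem, Finset.card_insert_of_notMem hnotmem, pow_succ, mul_comm]
    exact Ideal.mul_mem_mul (hg x (Finset.mem_insert_self x T'))
      (ih fun i hi => hg i (Finset.mem_insert_of_mem hi))

lemma span_pow_le (F : Finset D) (n : ℕ) (hn : 0 < n) :
    Ideal.span (↑F : Set D) ^ (F.card * (n - 1) + n) ≤
      Ideal.span ((· ^ n) '' (↑F : Set D)) * Ideal.span (↑F : Set D) ^ (F.card * (n - 1)) := by
  classical
  set N := F.card * (n - 1) with hN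
  show Submodule.span D (↑F : Set D) ^ (N + n) ≤ _
  rw [Submodule.span_pow]
  rw [Ideal.span, Submodule.span_le]
  rintro z hz
  rw [Set.mem_pow] at hz
  obtain ⟨f, hf⟩ := hz
  rw [List.prod_ofFn] at hf
  set v : Fin (N + n) → D := fun i => (f i : D) with hv
  have hmaps : ∀ i ∈ (Finset.univ : Finset (Fin (N + n))), v i ∈ F := fun i _ => (f i).2
  have hcard : F.card * (n - 1) < (Finset.univ : Finset (Fin (N + n))).card := by
    rw [Finset.card_univ, Fintype.card_fin]
    omega
  obtain ⟨x, hxF, hxcard⟩ :=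
    Finset.exists_lt_card_fiber_of_mul_lt_card_of_maps_to hmaps hcard
  have hncard : n ≤ (Finset.univ.filter fun i => v i = x).card := by omega
  obtain ⟨T', hT'sub, hT'card⟩ := Finset.exists_subset_card_eq hncard
  have hsplit : z = (∏ i ∈ T', v i) * ∏ i ∈ T'ᶜ, v i := by
    rw [Finset.prod_mul_prod_compl, hf]
  have h1 : ∏ i ∈ T', v i = x ^ n := by
    rw [Finset.prod_congr rfl fun i hi => (Finset.mem_filter.mp (hT'sub hi)).2,
      Finset.prod_const, hT'card]
  have h2 : ∏ i ∈ T'ᶜ, v i ∈ Ideal.span (↑F : Set D) ^ N := by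
    have hc : T'ᶜ.card = N := by
      have := Finset.card_compl T'
      rw [hT'card, Fintype.card_fin] at this
      omega
    have h2' := prod_mem_pow (Ideal.span (↑F : Set D)) T'ᶜ v
      fun i _ => Ideal.subset_span (hmaps i (Finset.mem_univ i))
    rwa [hc] at h2'
  rw [SetLike.mem_coe, hsplit, h1]
  exact Ideal.mul_mem_mul (Ideal.subset_span ⟨x, hxF, rfl⟩) h2

variable {ι : Type*} (a : ι → D)

lemma exists_finset (s : StarOperation D K)
    (hA : ((Ideal.span (Set.range a) : Ideal D) : FI) ≠ 0)
    (hbase : s.star (((Ideal.span (Set.range a) : Ideal D) : FI) *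
      ((Ideal.span (Set.range a) : Ideal D) : FI)⁻¹) = 1) :
    ∃ Fs : Finset D, (↑Fs : Set D) ⊆ Set.range a ∧ Ideal.span (↑Fs : Set D) ≠ ⊥ ∧
      s.star (((Ideal.span (↑Fs : Set D) : Ideal D) : FI) *
        ((Ideal.span (Set.range a) : Ideal D) : FI)⁻¹) = 1 := by
  classical
  set A : FI := ((Ideal.span (Set.range a) : Ideal D) : FI) with hAdef
  have hAi : A⁻¹ ≠ 0 := finv_ne_zero hA
  have hAA : A * A⁻¹ ≠ 0 := fmul_ne_zero hA hAi
  have hmem1 : (1 : K) ∈ s.star (A * A⁻¹) := by rw [hbase]; exact one_mem_one _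
  obtain ⟨C, hC0, hCle, hCfg, hC1⟩ := s.finite_character _ hAA 1 hmem1
  -- every element of A * A⁻¹ lies in (span Fs) * A⁻¹ for some finite Fs ⊆ range a
  have key : ∀ t ∈ (↑A * ↑A⁻¹ : Submodule D K), ∃ Fs : Finset D,
      (↑Fs : Set D) ⊆ Set.range a ∧
      t ∈ ((Ideal.span (↑Fs : Set D) : Ideal D) : FI) * A⁻¹ := by
    intro t ht
    refine Submodule.mul_induction_on ht ?_ ?_
    · intro m hm y hy
      rw [FractionalIdeal.coe_coeIdeal] at hm
      rw [IsLocalization.mem_coeSubmodule] at hm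
      obtain ⟨i, hi, rfl⟩ := hm
      obtain ⟨Fs, hsub, hi'⟩ := Submodule.mem_span_finite_of_mem_span hi
      refine ⟨Fs, hsub, mul_mem_mul ?_ hy⟩
      exact FractionalIdeal.mem_coeIdeal_of_mem _ hi'
    · rintro t₁ t₂ ⟨F₁, hsub₁, hmem₁⟩ ⟨F₂, hsub₂, hmem₂⟩
      refine ⟨F₁ ∪ F₂, ?_, ?_⟩
      · rw [Finset.coe_union]
        exact Set.union_subset hsub₁ hsub₂
      · have hmono : ∀ F G : Finset D, F ⊆ G →
            ((Ideal.span (↑F : Set D) : Ideal D) : FI) * A⁻¹ ≤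
              ((Ideal.span (↑G : Set D) : Ideal D) : FI) * A⁻¹ := fun F G h =>
          fmul_mono ((FractionalIdeal.coeIdeal_le_coeIdeal K).mpr
            (Ideal.span_mono (Finset.coe_subset.mpr h))) le_rfl
        have h₁ := hmono F₁ (F₁ ∪ F₂) Finset.subset_union_left hmem₁
        have h₂ := hmono F₂ (F₁ ∪ F₂) Finset.subset_union_right hmem₂
        exact FractionalIdeal.mem_coe.mp (Submodule.add_mem _
          (FractionalIdeal.mem_coe.mpr h₁) (FractionalIdeal.mem_coe.mpr h₂))
  -- extract generators of C
  obtain ⟨T, hT⟩ := hCfg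
  have htmem : ∀ t ∈ T, t ∈ (↑A * ↑A⁻¹ : Submodule D K) := by
    intro t ht
    have : t ∈ (C : Submodule D K) := hT ▸ Submodule.subset_span ht
    have h2 : t ∈ (A * A⁻¹ : FI) := hCle this
    rwa [← FractionalIdeal.coe_mul]
  set g : {t : K // t ∈ T} → Finset D := fun t => (key t (htmem t t.2)).choose with hg
  have hgsub : ∀ t : {t : K // t ∈ T}, (↑(g t) : Set D) ⊆ Set.range a := fun t =>
    (key t (htmem t t.2)).choose_spec.1
  have hgmem : ∀ t : {t : K // t ∈ T},
      (t : K) ∈ ((Ideal.span (↑(g t) : Set D) : Ideal D) : FI) * A⁻¹ := fun t =>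
    (key t (htmem t t.2)).choose_spec.2
  set Fs : Finset D := T.attach.biUnion g with hFs
  have hmono : ∀ F G : Finset D, F ⊆ G →
      ((Ideal.span (↑F : Set D) : Ideal D) : FI) * A⁻¹ ≤
        ((Ideal.span (↑G : Set D) : Ideal D) : FI) * A⁻¹ := fun F G h =>
    fmul_mono ((FractionalIdeal.coeIdeal_le_coeIdeal K).mpr
      (Ideal.span_mono (Finset.coe_subset.mpr h))) le_rfl
  have hFsub : (↑Fs : Set D) ⊆ Set.range a := by
    intro x hx
    rw [hFs, Finset.coe_biUnion] at hx
    obtain ⟨t, -, hx'⟩ := Set.mem_iUnion₂.mp hx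
    exact hgsub t hx'
  have hCF : C ≤ ((Ideal.span (↑Fs : Set D) : Ideal D) : FI) * A⁻¹ := by
    intro x hx
    have hx' : x ∈ (C : Submodule D K) := hx
    rw [← hT] at hx'
    refine Submodule.span_le.mpr ?_ hx'
    intro t ht
    have := hgmem ⟨t, ht⟩
    exact hmono _ _ (Finset.subset_biUnion_of_mem g (Finset.mem_attach T ⟨t, ht⟩)) this
  have hFsne : Ideal.span (↑Fs : Set D) ≠ ⊥ := by
    intro hbot
    refine hC0 (FractionalIdeal.eq_zero_iff.mpr fun x hx => ?_)
    have hx' := hCF hx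
    rw [hbot, FractionalIdeal.coeIdeal_bot, zero_mul] at hx'
    exact (FractionalIdeal.mem_zero_iff _).mp hx'
  refine ⟨Fs, hFsub, hFsne, ?_⟩
  have hFcne : ((Ideal.span (↑Fs : Set D) : Ideal D) : FI) ≠ 0 :=
    FractionalIdeal.coeIdeal_ne_zero.mpr hFsne
  have hFA : ((Ideal.span (↑Fs : Set D) : Ideal D) : FI) ≤ A :=
    (FractionalIdeal.coeIdeal_le_coeIdeal K).mpr (Ideal.span_mono hFsub)
  have hprod_ne : ((Ideal.span (↑Fs : Set D) : Ideal D) : FI) * A⁻¹ ≠ 0 :=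
    fmul_ne_zero hFcne hAi
  refine le_antisymm ?_ ?_
  · calc s.star (((Ideal.span (↑Fs : Set D) : Ideal D) : FI) * A⁻¹)
        ≤ s.star 1 := by
          refine s.star_mono _ _ hprod_ne one_ne_zero ?_
          calc ((Ideal.span (↑Fs : Set D) : Ideal D) : FI) * A⁻¹ ≤ A * A⁻¹ :=
                fmul_mono hFA le_rfl
            _ ≤ 1 := by rw [FractionalIdeal.inv_eq]; exact FractionalIdeal.mul_one_div_le_one
      _ = 1 := star_one s
  · have h1 : (1 : K) ∈ s.star (((Ideal.span (↑Fs : Set D) : Ideal D) : FI) * A⁻¹) :=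
      s.star_mono _ _ hC0 hprod_ne hCF hC1
    rw [← FractionalIdeal.spanSingleton_one (S := nonZeroDivisors D)]
    exact FractionalIdeal.spanSingleton_le_iff_mem.mpr h1

end StarHelper

end Helpers

theorem stmt1 (s : StarOperation D K) {ι : Type*} (a : ι → D) (ha : ∀ α, a α ≠ 0)
    (hinv : s.IsStarInvertible
      (s.star ((Ideal.span (Set.range a) : Ideal D) : FractionalIdeal (nonZeroDivisors D) K)))
    (n : ℕ) (hn : 0 < n) :
    s.star ((Ideal.span (Set.range fun α => a α ^ n) : Ideal D) : FractionalIdeal (nonZeroDivisors D) K) =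
      s.star (((Ideal.span (Set.range a)) ^ n : Ideal D) : FractionalIdeal (nonZeroDivisors D) K) := by
  classical
  open StarHelper in
  by_cases hι : IsEmpty ι
  · have h1 : Set.range a = ∅ := Set.range_eq_empty_iff.mpr hι
    have h2 : Set.range (fun α => a α ^ n) = ∅ := Set.range_eq_empty_iff.mpr hι
    rw [h1, h2, Ideal.span_empty]
    congr 1
    rw [← Ideal.zero_eq_bot, zero_pow hn.ne']
  · have : Nonempty ι := not_isEmpty_iff.mp hι
    obtain ⟨α₀⟩ := this
    set I₀ : Ideal D := Ideal.span (Set.range a) with hI₀def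
    have hI₀ : I₀ ≠ ⊥ := by
      intro h
      exact ha α₀ ((Submodule.mem_bot D).mp
        (h ▸ Ideal.subset_span (Set.mem_range_self α₀)))
    set A : FractionalIdeal (nonZeroDivisors D) K := (I₀ : FractionalIdeal (nonZeroDivisors D) K)
      with hAdef
    have hA : A ≠ 0 := FractionalIdeal.coeIdeal_ne_zero.mpr hI₀
    have hsA : s.star A ≠ 0 := StarHelper.star_ne_zero s hA
    have hsAi : (s.star A)⁻¹ ≠ 0 := StarHelper.finv_ne_zero hsA
    -- A itself is star-invertible
    have hbase : s.star (A * A⁻¹) = 1 := by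
      have h1 : s.star (A * (s.star A)⁻¹) = 1 := by
        rw [← StarHelper.star_mul_star s hA hsAi]
        exact hinv
      have hle : (s.star A)⁻¹ ≤ A⁻¹ :=
        FractionalIdeal.inv_anti_mono hA hsA (s.le_star A hA)
      have hAAi : A * A⁻¹ ≠ 0 := StarHelper.fmul_ne_zero hA (StarHelper.finv_ne_zero hA)
      have hup : s.star (A * A⁻¹) ≤ s.star 1 := by
        refine s.star_mono _ _ hAAi one_ne_zero ?_
        rw [FractionalIdeal.inv_eq]
        exact FractionalIdeal.mul_one_div_le_one
      refine le_antisymm (le_trans hup (le_of_eq (StarHelper.star_one s))) ?_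
      calc (1 : FractionalIdeal (nonZeroDivisors D) K) = s.star (A * (s.star A)⁻¹) := h1.symm
        _ ≤ s.star (A * A⁻¹) := s.star_mono _ _
            (StarHelper.fmul_ne_zero hA hsAi) hAAi (StarHelper.fmul_mono le_rfl hle)
    obtain ⟨Fs, hFsub, hFne, hFstar1⟩ := StarHelper.exists_finset a s hA hbase
    set Fc : FractionalIdeal (nonZeroDivisors D) K :=
      ((Ideal.span (↑Fs : Set D) : Ideal D) : FractionalIdeal (nonZeroDivisors D) K) with hFcdef
    have hFc : Fc ≠ 0 := FractionalIdeal.coeIdeal_ne_zero.mpr hFne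
    have hFcA : Fc ≤ A := (FractionalIdeal.coeIdeal_le_coeIdeal K).mpr (Ideal.span_mono hFsub)
    -- star Fc = star A
    have hstarFA : s.star Fc = s.star A := by
      have e1 : s.star (A * s.star (Fc * A⁻¹)) = s.star A := by rw [hFstar1, mul_one]
      have hFcAi : Fc * A⁻¹ ≠ 0 := StarHelper.fmul_ne_zero hFc (StarHelper.finv_ne_zero hA)
      rw [StarHelper.mul_star_star s hA hFcAi] at e1
      have e2 : A * (Fc * A⁻¹) = Fc * (A * A⁻¹) := by ring
      rw [e2, ← StarHelper.mul_star_star s hFc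
        (StarHelper.fmul_ne_zero hA (StarHelper.finv_ne_zero hA)), hbase, mul_one] at e1
      exact e1
    -- Fc is star-invertible
    have hFinv : s.star (Fc * Fc⁻¹) = 1 := by
      have hle : A⁻¹ ≤ Fc⁻¹ := FractionalIdeal.inv_anti_mono hFc hA hFcA
      have hFcFci : Fc * Fc⁻¹ ≠ 0 := StarHelper.fmul_ne_zero hFc (StarHelper.finv_ne_zero hFc)
      have hup : s.star (Fc * Fc⁻¹) ≤ s.star 1 := by
        refine s.star_mono _ _ hFcFci one_ne_zero ?_
        rw [FractionalIdeal.inv_eq]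
        exact FractionalIdeal.mul_one_div_le_one
      refine le_antisymm (le_trans hup (le_of_eq (StarHelper.star_one s))) ?_
      calc (1 : FractionalIdeal (nonZeroDivisors D) K) = s.star (Fc * A⁻¹) := hFstar1.symm
        _ ≤ s.star (Fc * Fc⁻¹) := s.star_mono _ _
            (StarHelper.fmul_ne_zero hFc (StarHelper.finv_ne_zero hA)) hFcFci
            (StarHelper.fmul_mono le_rfl hle)
    set N : ℕ := Fs.card * (n - 1) with hNdef
    have hNinv : s.star (Fc ^ N * (Fc ^ N)⁻¹) = 1 := StarHelper.star_inv_pow s hFc hFinv N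
    -- the ideal of n-th powers
    set B₀ : Ideal D := Ideal.span (Set.range fun α => a α ^ n) with hB₀def
    set BF : Ideal D := Ideal.span ((· ^ n) '' (↑Fs : Set D)) with hBFdef
    have hBF_le_B₀ : BF ≤ B₀ := by
      rw [hBFdef, Ideal.span_le]
      rintro x ⟨y, hy, rfl⟩
      obtain ⟨α, rfl⟩ := hFsub hy
      exact Ideal.subset_span ⟨α, rfl⟩
    have hB₀_le : B₀ ≤ I₀ ^ n := by
      rw [hB₀def, Ideal.span_le]
      rintro x ⟨α, rfl⟩
      exact SetLike.mem_coe.mpr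
        (Ideal.pow_mem_pow (Ideal.subset_span (Set.mem_range_self α)) n)
    have hBFne : BF ≠ ⊥ := by
      have hFsnonempty : Fs.Nonempty := by
        rcases Finset.eq_empty_or_nonempty Fs with h | h
        · exact absurd (by rw [h, Finset.coe_empty, Ideal.span_empty]) hFne
        · exact h
      obtain ⟨y, hy⟩ := hFsnonempty
      intro h
      obtain ⟨α, rfl⟩ := hFsub hy
      have : a α ^ n ∈ BF := Ideal.subset_span ⟨a α, hy, rfl⟩
      rw [h, Submodule.mem_bot] at this
      exact pow_ne_zero n (ha α) this
    set BFc : FractionalIdeal (nonZeroDivisors D) K :=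
      ((BF : Ideal D) : FractionalIdeal (nonZeroDivisors D) K) with hBFcdef
    have hBFc : BFc ≠ 0 := FractionalIdeal.coeIdeal_ne_zero.mpr hBFne
    have hB₀ne : B₀ ≠ ⊥ := fun h => hBFne (eq_bot_iff.mpr (h ▸ hBF_le_B₀))
    have hBc : ((B₀ : Ideal D) : FractionalIdeal (nonZeroDivisors D) K) ≠ 0 :=
      FractionalIdeal.coeIdeal_ne_zero.mpr hB₀ne
    -- rewrite goal with A^n
    rw [show ((Ideal.span (Set.range fun α => a α ^ n) : Ideal D) : FractionalIdeal (nonZeroDivisors D) K) = ((B₀ : Ideal D) : FractionalIdeal (nonZeroDivisors D) K) from rfl,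
      show ((Ideal.span (Set.range a) ^ n : Ideal D) : FractionalIdeal (nonZeroDivisors D) K) = A ^ n from FractionalIdeal.coeIdeal_pow _ _ I₀ n]
    refine le_antisymm ?_ ?_
    · refine s.star_mono _ _ hBc (StarHelper.fpow_ne_zero hA n) ?_
      calc ((B₀ : Ideal D) : FractionalIdeal (nonZeroDivisors D) K)
          ≤ ((I₀ ^ n : Ideal D) : FractionalIdeal (nonZeroDivisors D) K) :=
            (FractionalIdeal.coeIdeal_le_coeIdeal K).mpr hB₀_le
        _ = A ^ n := FractionalIdeal.coeIdeal_pow _ _ I₀ n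
    · have e1 : s.star (A ^ n) = s.star (Fc ^ n) :=
        StarHelper.star_pow_congr s hA hFc hstarFA.symm n
      have hidl := StarHelper.span_pow_le Fs n hn
      have hfrac : Fc ^ (N + n) ≤ BFc * Fc ^ N := by
        calc Fc ^ (N + n)
            = ((Ideal.span (↑Fs : Set D) ^ (N + n) : Ideal D) :
                FractionalIdeal (nonZeroDivisors D) K) :=
              (FractionalIdeal.coeIdeal_pow _ _ _ _).symm
          _ ≤ ((BF * Ideal.span (↑Fs : Set D) ^ N : Ideal D) :
                FractionalIdeal (nonZeroDivisors D) K) :=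
              (FractionalIdeal.coeIdeal_le_coeIdeal K).mpr hidl
          _ = BFc * Fc ^ N := by
              rw [FractionalIdeal.coeIdeal_mul, FractionalIdeal.coeIdeal_pow]
      have hcanc : s.star (Fc ^ n) ≤ s.star BFc := by
        refine StarHelper.star_cancel s (StarHelper.fpow_ne_zero hFc N)
          (StarHelper.fpow_ne_zero hFc n) hBFc hNinv ?_
        refine s.star_mono _ _
          (StarHelper.fmul_ne_zero (StarHelper.fpow_ne_zero hFc N)
            (StarHelper.fpow_ne_zero hFc n))
          (StarHelper.fmul_ne_zero (StarHelper.fpow_ne_zero hFc N) hBFc) ?_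
        calc Fc ^ N * Fc ^ n = Fc ^ (N + n) := (pow_add Fc N n).symm
          _ ≤ BFc * Fc ^ N := hfrac
          _ = Fc ^ N * BFc := mul_comm _ _
      have e3 : s.star BFc ≤ s.star ((B₀ : Ideal D) : FractionalIdeal (nonZeroDivisors D) K) :=
        s.star_mono _ _ hBFc hBc ((FractionalIdeal.coeIdeal_le_coeIdeal K).mpr hBF_le_B₀)
      calc s.star (A ^ n) = s.star (Fc ^ n) := e1
        _ ≤ s.star BFc := hcanc
        _ ≤ s.star _ := e3
end

section
/- Let ∗ be a finite character star-operation on a domain D and let A be a P-∗-almost super-homogeneous ideal. If B = (b_1, …, b_s) is a P-∗-homogeneous ideal of D, then there exists a positive integer n such that either (A^n + (b_1^n, …, b_s^n))_∗ = (A^n)_∗ or (A^n + (b_1^n, …, b_s^n))_∗ = (b_1^n, …, b_s^n)_∗. -/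
open FractionalIdeal

variable (D : Type*) (K : Type*) [CommRing D] [IsDomain D] [Field K] [Algebra D K]
  [IsFractionRing D K]

variable {D : Type*} {K : Type*} [CommRing D] [IsDomain D] [Field K] [Algebra D K]
  [IsFractionRing D K]

open StarOperation

section AuxProof
set_option linter.unusedSectionVars false
set_option linter.unnecessarySimpa false

variable {D : Type*} {K : Type*} [CommRing D] [IsDomain D] [Field K] [Algebra D K]
  [IsFractionRing D K]

open StarOperation

theorem FI.exists_mem_ne_zero {A : FractionalIdeal (nonZeroDivisors D) K} (h : A ≠ 0) :
    ∃ x ∈ A, x ≠ (0 : K) := by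
  by_contra hc
  push_neg at hc
  exact h (FractionalIdeal.eq_zero_iff.mpr hc)

theorem FI.mul_ne_zero {A B : FractionalIdeal (nonZeroDivisors D) K} (hA : A ≠ 0) (hB : B ≠ 0) :
    A * B ≠ 0 := by
  obtain ⟨x, hx, hx0⟩ := FI.exists_mem_ne_zero hA
  obtain ⟨y, hy, hy0⟩ := FI.exists_mem_ne_zero hB
  intro h0
  have hm : x * y ∈ A * B := FractionalIdeal.mul_mem_mul hx hy
  rw [h0, FractionalIdeal.mem_zero_iff] at hm
  rcases mul_eq_zero.mp hm with h | h
  exacts [hx0 h, hy0 h]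
  

theorem FI.pow_ne_zero {A : FractionalIdeal (nonZeroDivisors D) K} (hA : A ≠ 0) (n : ℕ) :
    A ^ n ≠ 0 := by
  induction n with
  | zero => simpa using one_ne_zero
  | succ n ih => rw [pow_succ]; exact FI.mul_ne_zero ih hA

theorem StarOperation.star_one' (s : StarOperation D K) : s.star 1 = 1 := by
  have h := s.star_principal 1 one_ne_zero
  rwa [FractionalIdeal.spanSingleton_one] at h

theorem StarOperation.star_ne_zero' (s : StarOperation D K)
    {A : FractionalIdeal (nonZeroDivisors D) K} (h : A ≠ 0) : s.star A ≠ 0 := by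
  intro h0
  exact h (le_antisymm (h0 ▸ s.le_star A h) (FractionalIdeal.zero_le A))

theorem StarOperation.star_le_one (s : StarOperation D K)
    {A : FractionalIdeal (nonZeroDivisors D) K} (h0 : A ≠ 0) (h1 : A ≤ 1) : s.star A ≤ 1 := by
  have := s.star_mono A 1 h0 one_ne_zero h1
  rwa [s.star_one'] at this

theorem StarOperation.star_mul_right (s : StarOperation D K)
    {X Y : FractionalIdeal (nonZeroDivisors D) K} (hX : X ≠ 0) (hY : Y ≠ 0) :
    s.star (X * s.star Y) = s.star (X * Y) := by
  have hXY : X * Y ≠ 0 := FI.mul_ne_zero hX hY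
  have hsY : s.star Y ≠ 0 := s.star_ne_zero' hY
  apply le_antisymm
  · have h1 : X * s.star Y ≤ s.star (X * Y) := by
      refine FractionalIdeal.mul_le.mpr ?_
      intro x hx u hu
      rcases eq_or_ne x 0 with rfl | hx0
      · rw [zero_mul]; exact zero_mem _
      · have hsx : FractionalIdeal.spanSingleton (nonZeroDivisors D) x ≠ 0 :=
          fun h => hx0 (FractionalIdeal.spanSingleton_eq_zero_iff.mp h)
        have hmem : x * u ∈ FractionalIdeal.spanSingleton (nonZeroDivisors D) x * s.star Y :=
          FractionalIdeal.mul_mem_mul (FractionalIdeal.mem_spanSingleton_self _ _) hu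
        rw [← s.star_smul x Y hx0 hY] at hmem
        have hle : FractionalIdeal.spanSingleton (nonZeroDivisors D) x * Y ≤ X * Y := by
          refine FractionalIdeal.mul_le.mpr (fun i hi j hj => FractionalIdeal.mul_mem_mul ?_ hj)
          exact (FractionalIdeal.spanSingleton_le_iff_mem.mpr hx) hi
        exact s.star_mono _ _ (FI.mul_ne_zero hsx hY) hXY hle hmem
    have := s.star_mono _ _ (FI.mul_ne_zero hX hsY) (s.star_ne_zero' hXY) h1
    rwa [s.star_star _ hXY] at this
  · refine s.star_mono _ _ hXY (FI.mul_ne_zero hX hsY) ?_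
    refine FractionalIdeal.mul_le.mpr (fun i hi j hj => FractionalIdeal.mul_mem_mul hi ?_)
    exact s.le_star Y hY hj

theorem StarOperation.star_mul_left (s : StarOperation D K)
    {X Y : FractionalIdeal (nonZeroDivisors D) K} (hX : X ≠ 0) (hY : Y ≠ 0) :
    s.star (s.star X * Y) = s.star (X * Y) := by
  rw [mul_comm, s.star_mul_right hY hX, mul_comm]

theorem StarOperation.star_mul_unit_pow (s : StarOperation D K)
    {X A B : FractionalIdeal (nonZeroDivisors D) K} (hX : X ≠ 0) (hA : A ≠ 0) (hB : B ≠ 0)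
    (hinv : s.star (A * B) = 1) (m : ℕ) :
    s.star (X * (A * B) ^ m) = s.star X := by
  induction m with
  | zero => rw [pow_zero, mul_one]
  | succ m ih =>
      have hAB : A * B ≠ 0 := FI.mul_ne_zero hA hB
      have hXp : X * (A * B) ^ m ≠ 0 := FI.mul_ne_zero hX (FI.pow_ne_zero hAB m)
      rw [pow_succ, ← mul_assoc, ← s.star_mul_right hXp hAB, hinv, mul_one, ih]

theorem ideal_sup_pow_le {R : Type*} [CommRing R] (I J : Ideal R) :
    ∀ p q : ℕ, (I ⊔ J) ^ (p + q) ≤ I ^ p * (I ⊔ J) ^ q ⊔ J ^ q * (I ⊔ J) ^ p := by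
  intro p
  induction p with
  | zero =>
      intro q
      rw [zero_add, pow_zero, one_mul]
      exact le_sup_left
  | succ p ihp =>
      intro q
      induction q with
      | zero =>
          simp only [add_zero, pow_zero, one_mul, mul_one]
          exact le_sup_right
      | succ q ihq =>
          have harith : p + 1 + (q + 1) = (p + (q + 1)) + 1 := by omega
          rw [harith, pow_succ]
          have hXsplit : (I ⊔ J) ^ (p + (q + 1)) * (I ⊔ J) =
              (I ⊔ J) ^ (p + (q + 1)) * I ⊔ (I ⊔ J) ^ (p + (q + 1)) * J := by
            rw [Submodule.mul_sup]
          rw [hXsplit]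
          apply sup_le
          · -- I-branch, uses ihp at (q+1)
            have h1 : (I ⊔ J) ^ (p + (q + 1)) * I ≤
                (I ^ p * (I ⊔ J) ^ (q + 1) ⊔ J ^ (q + 1) * (I ⊔ J) ^ p) * I :=
              Ideal.mul_mono (ihp (q + 1)) le_rfl
            refine h1.trans ?_
            rw [Submodule.sup_mul]
            apply sup_le
            · have : I ^ p * (I ⊔ J) ^ (q + 1) * I = I ^ (p + 1) * (I ⊔ J) ^ (q + 1) := by
                rw [pow_succ]; ring
              rw [this]; exact le_sup_left
            · refine le_sup_of_le_right ?_
              have : J ^ (q + 1) * (I ⊔ J) ^ p * I = J ^ (q + 1) * ((I ⊔ J) ^ p * I) := by ring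
              rw [this, pow_succ]
              exact Ideal.mul_mono le_rfl (Ideal.mul_mono le_rfl le_sup_left)
          · -- J-branch, uses ihq (at p+1, q)
            have harith2 : p + (q + 1) = (p + 1) + q := by omega
            rw [harith2]
            have h1 : (I ⊔ J) ^ ((p + 1) + q) * J ≤
                (I ^ (p + 1) * (I ⊔ J) ^ q ⊔ J ^ q * (I ⊔ J) ^ (p + 1)) * J :=
              Ideal.mul_mono ihq le_rfl
            refine h1.trans ?_
            rw [Submodule.sup_mul]
            apply sup_le
            · refine le_sup_of_le_left ?_
              have : I ^ (p + 1) * (I ⊔ J) ^ q * J = I ^ (p + 1) * ((I ⊔ J) ^ q * J) := by ring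
              rw [this, pow_succ]
              exact Ideal.mul_mono le_rfl (Ideal.mul_mono le_rfl le_sup_right)
            · refine le_sup_of_le_right ?_
              have : J ^ q * (I ⊔ J) ^ (p + 1) * J = J ^ (q + 1) * (I ⊔ J) ^ (p + 1) := by
                rw [pow_succ]; ring
              rw [this]

theorem span_pow_pigeonhole {R : Type*} [CommRing R] :
    ∀ (t : ℕ) (a : Fin t → R) (n : ℕ), 0 < n →
      ∃ m : ℕ, Ideal.span (Set.range a) ^ (m + n) ≤
        Ideal.span (Set.range fun i => a i ^ n) * Ideal.span (Set.range a) ^ m := by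
  intro t
  induction t with
  | zero =>
      intro a n hn
      refine ⟨0, ?_⟩
      rw [Set.range_eq_empty, Ideal.span_empty, zero_add, ← Ideal.zero_eq_bot,
        zero_pow hn.ne']
      exact bot_le
  | succ t ih =>
      intro a n hn
      obtain ⟨m', hm'⟩ := ih (Fin.tail a) n hn
      refine ⟨m' + n, ?_⟩
      have hcons : a = Fin.cons (a 0) (Fin.tail a) := (Fin.cons_self_tail a).symm
      have hrange : Ideal.span (Set.range a) =
          Ideal.span {a 0} ⊔ Ideal.span (Set.range (Fin.tail a)) := by
        conv_lhs => rw [hcons]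
        rw [Fin.range_cons, Ideal.span_insert]
      have hpows : (fun i => a i ^ n) = Fin.cons (a 0 ^ n) (fun i => Fin.tail a i ^ n) := by
        funext i
        refine Fin.cases ?_ (fun j => ?_) i
        · simp
        · simp [Fin.tail]
      have hrangen : Ideal.span (Set.range fun i => a i ^ n) =
          Ideal.span {a 0 ^ n} ⊔ Ideal.span (Set.range fun i => Fin.tail a i ^ n) := by
        rw [hpows, Fin.range_cons, Ideal.span_insert]
      set A := Ideal.span (Set.range a) with hA
      set A' := Ideal.span (Set.range (Fin.tail a)) with hA'
      set An := Ideal.span (Set.range fun i => a i ^ n) with hAn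
      set An' := Ideal.span (Set.range fun i => Fin.tail a i ^ n) with hAn'
      have harith : (m' + n) + n = n + (m' + n) := by omega
      rw [harith, hrange]
      refine (ideal_sup_pow_le (Ideal.span {a 0}) A' n (m' + n)).trans ?_
      rw [← hrange]
      apply sup_le
      · refine Ideal.mul_mono ?_ le_rfl
        rw [Ideal.span_singleton_pow, hrangen]
        exact le_sup_left
      · have h1 : A' ^ (m' + n) ≤ An' * A' ^ m' := hm'
        have h2 : A' ^ (m' + n) * A ^ n ≤ (An' * A' ^ m') * A ^ n :=
          Ideal.mul_mono h1 le_rfl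
        refine h2.trans ?_
        have h3 : (An' * A' ^ m') * A ^ n ≤ (An * A ^ m') * A ^ n := by
          refine Ideal.mul_mono (Ideal.mul_mono ?_ ?_) le_rfl
          · rw [hrangen]; exact le_sup_right
          · refine Ideal.pow_right_mono ?_ m'
            rw [hrange]; exact le_sup_right
        refine h3.trans ?_
        have : (An * A ^ m') * A ^ n = An * A ^ (m' + n) := by
          rw [pow_add]; ring
        rw [this]

theorem StarOperation.star_coeIdeal_pow_eq (s : StarOperation D K) {I : Ideal D} (hI0 : I ≠ ⊥)
    (hinv : s.IsStarInvertibleI I) {t : ℕ} {a : Fin t → D}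
    (ha : Ideal.span (Set.range a) = I) {n : ℕ} (hn : 0 < n) :
    s.star ((I ^ n : Ideal D) : FractionalIdeal (nonZeroDivisors D) K) =
      s.star ((Ideal.span (Set.range fun i => a i ^ n) : Ideal D) :
        FractionalIdeal (nonZeroDivisors D) K) := by
  classical
  set X : FractionalIdeal (nonZeroDivisors D) K := (I : FractionalIdeal (nonZeroDivisors D) K)
    with hXdef
  have hX : X ≠ 0 := (FractionalIdeal.coeIdeal_ne_zero' le_rfl).mpr hI0
  have hXinv1 : (1 : FractionalIdeal (nonZeroDivisors D) K) ≤ X⁻¹ := by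
    rw [FractionalIdeal.inv_eq, FractionalIdeal.le_div_iff_mul_le hX, one_mul]
    exact FractionalIdeal.coeIdeal_le_one
  have hXi : X⁻¹ ≠ 0 := by
    intro h
    have h10 : (1 : FractionalIdeal (nonZeroDivisors D) K) = 0 :=
      le_antisymm (h ▸ hXinv1) (FractionalIdeal.zero_le _)
    have hm1 : (1 : K) ∈ (0 : FractionalIdeal (nonZeroDivisors D) K) := by
      rw [← h10]; exact (FractionalIdeal.mem_one_iff _).mpr ⟨1, map_one _⟩
    rw [FractionalIdeal.mem_zero_iff] at hm1
    exact one_ne_zero hm1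
  set An := Ideal.span (Set.range fun i => a i ^ n) with hAn
  have hAnle : An ≤ I ^ n := by
    rw [hAn, Ideal.span_le]
    rintro x ⟨i, rfl⟩
    exact Ideal.pow_mem_pow (ha ▸ Ideal.subset_span ⟨i, rfl⟩) n
  have hexa : ∃ i, a i ≠ 0 := by
    by_contra hc
    push_neg at hc
    apply hI0
    rw [← ha]
    refine le_bot_iff.mp ?_
    rw [Ideal.span_le]
    rintro x ⟨i, rfl⟩
    simp [hc i]
  have hAn0 : An ≠ ⊥ := by
    obtain ⟨i, hi⟩ := hexa
    intro hbot
    have : a i ^ n ∈ An := Ideal.subset_span ⟨i, rfl⟩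
    rw [hbot, Submodule.mem_bot] at this
    exact hi (by simpa [pow_eq_zero_iff hn.ne'] using this)
  have hAnF : ((An : Ideal D) : FractionalIdeal (nonZeroDivisors D) K) ≠ 0 :=
    (FractionalIdeal.coeIdeal_ne_zero' le_rfl).mpr hAn0
  obtain ⟨m, hm⟩ := span_pow_pigeonhole t a n hn
  rw [ha, ← hAn] at hm
  have hXX : X * X⁻¹ ≠ 0 := FI.mul_ne_zero hX hXi
  have hstarinv : s.star (X * X⁻¹) = 1 := hinv
  apply le_antisymm
  · have h1 : s.star ((I ^ n : Ideal D) : FractionalIdeal (nonZeroDivisors D) K) =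
        s.star (X ^ n * (X * X⁻¹) ^ m) := by
      rw [s.star_mul_unit_pow (FI.pow_ne_zero hX n) hX hXi hstarinv m,
        FractionalIdeal.coeIdeal_pow]
    have hle : X ^ (m + n) ≤ (An : FractionalIdeal (nonZeroDivisors D) K) * X ^ m := by
      rw [hXdef, ← FractionalIdeal.coeIdeal_pow, ← FractionalIdeal.coeIdeal_pow,
        ← FractionalIdeal.coeIdeal_mul]
      exact (FractionalIdeal.coeIdeal_le_coeIdeal K).mpr hm
    have h2 : X ^ n * (X * X⁻¹) ^ m ≤
        (An : FractionalIdeal (nonZeroDivisors D) K) * (X * X⁻¹) ^ m := by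
      have he1 : X ^ n * (X * X⁻¹) ^ m = X ^ (m + n) * (X⁻¹) ^ m := by
        rw [mul_pow, pow_add]; ring
      have he2 : ((An : FractionalIdeal (nonZeroDivisors D) K) * X ^ m) * (X⁻¹) ^ m =
          (An : FractionalIdeal (nonZeroDivisors D) K) * (X * X⁻¹) ^ m := by
        rw [mul_pow]; ring
      rw [he1, ← he2]
      exact FractionalIdeal.mul_le.mpr fun i hi j hj =>
        FractionalIdeal.mul_mem_mul (hle hi) hj
    have h3 := s.star_mono _ _
      (FI.mul_ne_zero (FI.pow_ne_zero hX n) (FI.pow_ne_zero hXX m))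
      (FI.mul_ne_zero hAnF (FI.pow_ne_zero hXX m)) h2
    rw [s.star_mul_unit_pow hAnF hX hXi hstarinv m] at h3
    rw [h1]
    exact h3
  · refine s.star_mono _ _ hAnF ?_ ((FractionalIdeal.coeIdeal_le_coeIdeal K).mpr hAnle)
    rw [FractionalIdeal.coeIdeal_pow]
    exact FI.pow_ne_zero hX n

theorem chain_finset_mem {c : Set (Ideal D)} (hc : IsChain (· ≤ ·) c) {y : Ideal D}
    (hy : y ∈ c) (S : Finset K)
    (h : ∀ x ∈ S, ∃ J ∈ c, x ∈ (J : FractionalIdeal (nonZeroDivisors D) K)) :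
    ∃ J ∈ c, ∀ x ∈ S, x ∈ (J : FractionalIdeal (nonZeroDivisors D) K) := by
  classical
  induction S using Finset.induction_on with
  | empty => exact ⟨y, hy, by simp⟩
  | insert z S' hni ih =>
      obtain ⟨J₁, hJ₁, hall⟩ := ih (fun x hx => h x (Finset.mem_insert_of_mem hx))
      obtain ⟨J₂, hJ₂, hz⟩ := h z (Finset.mem_insert_self _ _)
      rcases eq_or_ne J₁ J₂ with rfl | hne
      · exact ⟨J₁, hJ₁, fun x hx => by
          rcases Finset.mem_insert.mp hx with rfl | hx
          · exact hz
          · exact hall x hx⟩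
      rcases hc.total hJ₁ hJ₂ with hle | hle
      · refine ⟨J₂, hJ₂, fun x hx => ?_⟩
        rcases Finset.mem_insert.mp hx with rfl | hx
        · exact hz
        · exact (FractionalIdeal.coeIdeal_le_coeIdeal K).mpr hle (hall x hx)
      · refine ⟨J₁, hJ₁, fun x hx => ?_⟩
        rcases Finset.mem_insert.mp hx with rfl | hx
        · exact (FractionalIdeal.coeIdeal_le_coeIdeal K).mpr hle hz
        · exact hall x hx

theorem StarOperation.exists_isMaxStarIdeal (s : StarOperation D K)
    {E : FractionalIdeal (nonZeroDivisors D) K} (hE0 : E ≠ 0) (hE1 : E ≤ 1)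
    (hEs : s.star E ≠ 1) :
    ∃ Q : Ideal D, s.IsMaxStarIdeal Q ∧ E ≤ (Q : FractionalIdeal (nonZeroDivisors D) K) := by
  classical
  have hG1 : s.star E ≤ 1 := s.star_le_one hE0 hE1
  obtain ⟨I0, hI0⟩ := FractionalIdeal.le_one_iff_exists_coeIdeal.mp hG1
  have hI0b : I0 ≠ ⊥ := by
    have hne : (I0 : FractionalIdeal (nonZeroDivisors D) K) ≠ 0 := by
      rw [hI0]; exact s.star_ne_zero' hE0
    exact (FractionalIdeal.coeIdeal_ne_zero' le_rfl).mp hne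
  have hI0t : I0 ≠ ⊤ := by
    rintro rfl
    rw [FractionalIdeal.coeIdeal_top] at hI0
    exact hEs hI0.symm
  have hI0s : s.IsStarIdeal I0 := by
    unfold StarOperation.IsStarIdeal
    rw [hI0, s.star_star E hE0]
  set T : Set (Ideal D) := {J : Ideal D | J ≠ ⊤ ∧ s.IsStarIdeal J ∧ I0 ≤ J} with hT
  have hzorn := zorn_le_nonempty₀ T ?_ I0 ⟨hI0t, hI0s, le_rfl⟩
  · obtain ⟨Q, hI0Q, hQmax⟩ := hzorn
    have hQT : Q ∈ T := hQmax.1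
    have hQb : Q ≠ ⊥ := fun h => hI0b (le_bot_iff.mp (h ▸ hI0Q))
    have hQF : (Q : FractionalIdeal (nonZeroDivisors D) K) ≠ 0 :=
      (FractionalIdeal.coeIdeal_ne_zero' le_rfl).mpr hQb
    -- key fact: adjoining anything outside Q gives star = 1
    have key : ∀ z : D, z ∉ Q → s.star ((Q ⊔ Ideal.span {z} : Ideal D) :
        FractionalIdeal (nonZeroDivisors D) K) = 1 := by
      intro z hz
      have hz0 : z ≠ 0 := fun h => hz (h ▸ Q.zero_mem)
      have hJ'b : (Q ⊔ Ideal.span {z} : Ideal D) ≠ ⊥ := fun h =>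
        hz0 (by
          have : z ∈ (Q ⊔ Ideal.span {z} : Ideal D) :=
            Submodule.mem_sup_right (Ideal.subset_span rfl)
          rw [h, Submodule.mem_bot] at this
          exact this)
      have hJ'F : ((Q ⊔ Ideal.span {z} : Ideal D) : FractionalIdeal (nonZeroDivisors D) K) ≠ 0 :=
        (FractionalIdeal.coeIdeal_ne_zero' le_rfl).mpr hJ'b
      have h1 : s.star ((Q ⊔ Ideal.span {z} : Ideal D) : FractionalIdeal (nonZeroDivisors D) K)
          ≤ 1 := s.star_le_one hJ'F FractionalIdeal.coeIdeal_le_one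
      obtain ⟨J₁, hJ₁⟩ := FractionalIdeal.le_one_iff_exists_coeIdeal.mp h1
      by_contra hne
      have hJ₁t : J₁ ≠ ⊤ := by
        rintro rfl
        rw [FractionalIdeal.coeIdeal_top] at hJ₁
        exact hne hJ₁.symm
      have hJ₁s : s.IsStarIdeal J₁ := by
        unfold StarOperation.IsStarIdeal
        rw [hJ₁, s.star_star _ hJ'F]
      have hQJ₁ : Q ≤ J₁ := by
        rw [← FractionalIdeal.coeIdeal_le_coeIdeal (K := K), hJ₁]
        exact le_trans ((FractionalIdeal.coeIdeal_le_coeIdeal K).mpr le_sup_left)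
          (s.le_star _ hJ'F)
      have hJ₁T : J₁ ∈ T := ⟨hJ₁t, hJ₁s, le_trans (hQT.2.2) hQJ₁⟩
      have hJ₁Q : J₁ ≤ Q := hQmax.2 hJ₁T hQJ₁
      apply hz
      apply hJ₁Q
      have hzJ' : (algebraMap D K) z ∈ ((Q ⊔ Ideal.span {z} : Ideal D) :
          FractionalIdeal (nonZeroDivisors D) K) :=
        FractionalIdeal.mem_coeIdeal_of_mem _ (Submodule.mem_sup_right (Ideal.subset_span rfl))
      have hzJ₁ : (algebraMap D K) z ∈ (J₁ : FractionalIdeal (nonZeroDivisors D) K) := by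
        rw [hJ₁]
        exact s.le_star _ hJ'F hzJ'
      obtain ⟨d, hd, hde⟩ := (FractionalIdeal.mem_coeIdeal _).mp hzJ₁
      rwa [IsFractionRing.injective D K hde] at hd
    have hQp : Q.IsPrime := by
      refine ⟨hQT.1, ?_⟩
      intro x y hxy
      by_contra hcon
      push_neg at hcon
      obtain ⟨hx, hy⟩ := hcon
      have hx0 : x ≠ 0 := fun h => hx (h ▸ Q.zero_mem)
      have hy0 : y ≠ 0 := fun h => hy (h ▸ Q.zero_mem)
      have hmulle : (Q ⊔ Ideal.span {x}) * (Q ⊔ Ideal.span {y}) ≤ Q := by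
        refine Ideal.mul_le.mpr ?_
        intro r hr w hw
        obtain ⟨q1, hq1, s1, hs1, rfl⟩ := Submodule.mem_sup.mp hr
        obtain ⟨q2, hq2, s2, hs2, rfl⟩ := Submodule.mem_sup.mp hw
        obtain ⟨cc, rfl⟩ := Ideal.mem_span_singleton'.mp hs1
        obtain ⟨dd, rfl⟩ := Ideal.mem_span_singleton'.mp hs2
        have hexp : (q1 + cc * x) * (q2 + dd * y) =
            q1 * (q2 + dd * y) + (cc * x) * q2 + (cc * dd) * (x * y) := by ring
        rw [hexp]
        exact Q.add_mem (Q.add_mem (Ideal.mul_mem_right _ _ hq1)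
          (Ideal.mul_mem_left _ _ hq2)) (Ideal.mul_mem_left _ _ hxy)
      have hxyne : x * y ≠ 0 := mul_ne_zero hx0 hy0
      have hprodb : (Q ⊔ Ideal.span {x}) * (Q ⊔ Ideal.span {y}) ≠ ⊥ := by
        intro h
        have hmem : x * y ∈ (Q ⊔ Ideal.span {x}) * (Q ⊔ Ideal.span {y}) :=
          Ideal.mul_mem_mul (Submodule.mem_sup_right (Ideal.subset_span rfl))
            (Submodule.mem_sup_right (Ideal.subset_span rfl))
        rw [h, Submodule.mem_bot] at hmem
        exact hxyne hmem
      have hQx : ((Q ⊔ Ideal.span {x} : Ideal D) : FractionalIdeal (nonZeroDivisors D) K) ≠ 0 :=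
        (FractionalIdeal.coeIdeal_ne_zero' le_rfl).mpr
          (fun h => hx0 (by
            have : x ∈ (Q ⊔ Ideal.span {x} : Ideal D) := Submodule.mem_sup_right (Ideal.subset_span rfl)
            rwa [h, Submodule.mem_bot] at this))
      have hQy : ((Q ⊔ Ideal.span {y} : Ideal D) : FractionalIdeal (nonZeroDivisors D) K) ≠ 0 :=
        (FractionalIdeal.coeIdeal_ne_zero' le_rfl).mpr
          (fun h => hy0 (by
            have : y ∈ (Q ⊔ Ideal.span {y} : Ideal D) := Submodule.mem_sup_right (Ideal.subset_span rfl)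
            rwa [h, Submodule.mem_bot] at this))
      have hcomp : s.star (((Q ⊔ Ideal.span {x}) * (Q ⊔ Ideal.span {y}) : Ideal D) :
          FractionalIdeal (nonZeroDivisors D) K) = 1 := by
        rw [FractionalIdeal.coeIdeal_mul, ← s.star_mul_left hQx hQy, key x hx, one_mul, key y hy]
      have hle2 := s.star_mono _ _
        ((FractionalIdeal.coeIdeal_ne_zero' le_rfl).mpr hprodb) hQF
        ((FractionalIdeal.coeIdeal_le_coeIdeal K).mpr hmulle)
      rw [hcomp, hQT.2.1] at hle2
      have h1Q : (1 : K) ∈ (Q : FractionalIdeal (nonZeroDivisors D) K) :=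
        hle2 ((FractionalIdeal.mem_one_iff _).mpr ⟨1, map_one _⟩)
      obtain ⟨d, hd, hde⟩ := (FractionalIdeal.mem_coeIdeal _).mp h1Q
      rw [← map_one (algebraMap D K)] at hde
      rw [IsFractionRing.injective D K hde] at hd
      exact hQT.1 ((Ideal.eq_top_iff_one Q).mpr hd)
    refine ⟨Q, ⟨hQb, hQT.1, hQp, hQT.2.1, ?_⟩, ?_⟩
    · intro J hJt hJs hQJ
      exact le_antisymm (hQmax.2 ⟨hJt, hJs, le_trans hQT.2.2 hQJ⟩ hQJ) hQJ
    · calc E ≤ s.star E := s.le_star E hE0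
        _ = (I0 : FractionalIdeal (nonZeroDivisors D) K) := hI0.symm
        _ ≤ (Q : FractionalIdeal (nonZeroDivisors D) K) :=
          (FractionalIdeal.coeIdeal_le_coeIdeal K).mpr hI0Q
  · -- Zorn chain condition
    intro c hcT hchain y hyc
    refine ⟨sSup c, ⟨?_, ?_, ?_⟩, fun z hz => le_sSup hz⟩
    · -- sSup c ≠ ⊤
      intro h
      have h1 : (1 : D) ∈ sSup c := h ▸ Submodule.mem_top
      obtain ⟨J, hJ, h1J⟩ := (Submodule.mem_sSup_of_directed ⟨y, hyc⟩ hchain.directedOn).mp h1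
      exact (hcT hJ).1 ((Ideal.eq_top_iff_one J).mpr h1J)
    · -- star ideal
      have hsb : sSup c ≠ ⊥ := fun h =>
        hI0b (le_bot_iff.mp (h ▸ le_trans (hcT hyc).2.2 (le_sSup hyc)))
      have hsF : ((sSup c : Ideal D) : FractionalIdeal (nonZeroDivisors D) K) ≠ 0 :=
        (FractionalIdeal.coeIdeal_ne_zero' le_rfl).mpr hsb
      refine le_antisymm ?_ (s.le_star _ hsF)
      intro x hx
      obtain ⟨B, hB0, hBle, hBfg, hxB⟩ := s.finite_character _ hsF x hx
      obtain ⟨S, hS⟩ := hBfg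
      have hgen : ∀ w : K, w ∈ (S : Set K) → ∃ J ∈ c,
          w ∈ (J : FractionalIdeal (nonZeroDivisors D) K) := by
        intro w hw
        have hwB : w ∈ B := by
          rw [← FractionalIdeal.mem_coe, ← hS]
          exact Submodule.subset_span hw
        have hwS : w ∈ ((sSup c : Ideal D) : FractionalIdeal (nonZeroDivisors D) K) := hBle hwB
        obtain ⟨d, hd, rfl⟩ := (FractionalIdeal.mem_coeIdeal _).mp hwS
        obtain ⟨J, hJ, hdJ⟩ :=
          (Submodule.mem_sSup_of_directed ⟨y, hyc⟩ hchain.directedOn).mp hd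
        exact ⟨J, hJ, FractionalIdeal.mem_coeIdeal_of_mem _ hdJ⟩
      obtain ⟨J, hJ, hallJ⟩ := chain_finset_mem hchain hyc S hgen
      have hBJ : B ≤ (J : FractionalIdeal (nonZeroDivisors D) K) := by
        rw [← FractionalIdeal.coe_le_coe, ← hS]
        refine Submodule.span_le.mpr ?_
        intro w hw
        exact hallJ w hw
      have hJb : J ≠ ⊥ := fun h =>
        hI0b (le_bot_iff.mp (h ▸ (hcT hJ).2.2))
      have hJF : (J : FractionalIdeal (nonZeroDivisors D) K) ≠ 0 :=
        (FractionalIdeal.coeIdeal_ne_zero' le_rfl).mpr hJb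
      have hxJ : x ∈ (J : FractionalIdeal (nonZeroDivisors D) K) := by
        have := s.star_mono B _ hB0 hJF hBJ
        rw [(hcT hJ).2.1] at this
        exact this hxB
      exact (FractionalIdeal.coeIdeal_le_coeIdeal K).mpr (le_sSup hJ) hxJ
    · -- I0 ≤ sSup c
      exact le_trans (hcT hyc).2.2 (le_sSup hyc)

theorem span_pow_ne_bot' {t : ℕ} {a : Fin t → D} (h : Ideal.span (Set.range a) ≠ ⊥) {n : ℕ}
    (hn : 0 < n) : Ideal.span (Set.range fun i => a i ^ n) ≠ ⊥ := by
  have hexa : ∃ i, a i ≠ 0 := by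
    by_contra hc
    push_neg at hc
    apply h
    refine le_bot_iff.mp (Ideal.span_le.mpr ?_)
    rintro x ⟨i, rfl⟩
    simp [hc i]
  obtain ⟨i, hi⟩ := hexa
  intro hbot
  have hm : a i ^ n ∈ Ideal.span (Set.range fun i => a i ^ n) := Ideal.subset_span ⟨i, rfl⟩
  rw [hbot, Submodule.mem_bot] at hm
  exact hi (by simpa [pow_eq_zero_iff hn.ne'] using hm)

end AuxProof
theorem stmt2 (s : StarOperation D K) (P I : Ideal D)
    (hI : s.IsAlmostSuperHomogeneous P I) {k : ℕ} (b : Fin k → D)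
    (hb : s.IsHomogeneous P (Ideal.span (Set.range b))) :
    ∃ n : ℕ, 0 < n ∧
      (s.star ((I ^ n + Ideal.span (Set.range fun i => b i ^ n) : Ideal D) : FractionalIdeal (nonZeroDivisors D) K) =
          s.star ((I ^ n : Ideal D) : FractionalIdeal (nonZeroDivisors D) K) ∨
        s.star ((I ^ n + Ideal.span (Set.range fun i => b i ^ n) : Ideal D) : FractionalIdeal (nonZeroDivisors D) K) =
          s.star ((Ideal.span (Set.range fun i => b i ^ n) : Ideal D) : FractionalIdeal (nonZeroDivisors D) K)) := by
  classical
  obtain ⟨hIinv, hIhom, halmost⟩ := hI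
  obtain ⟨hIb, hIfg, hPmax, hIP, hIuniq⟩ := hIhom
  obtain ⟨hBb, hBfg, -, hBP, hBuniq⟩ := hb
  obtain ⟨t, a, ha⟩ := Submodule.fg_iff_exists_fin_generating_family.mp hIfg
  have ha' : Ideal.span (Set.range a) = I := ha
  set c : Fin (t + k) → D := Fin.append a b with hc
  have hcP : ∀ i, c i ∈ P := by
    intro i
    refine Fin.addCases (fun j => ?_) (fun j => ?_) i
    · rw [hc, Fin.append_left]
      exact hIP (ha ▸ Ideal.subset_span ⟨j, rfl⟩)
    · rw [hc, Fin.append_right]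
      exact hBP (Ideal.subset_span ⟨j, rfl⟩)
  have hIc : I ≤ Ideal.span (Set.range c) := by
    rw [← ha]
    refine Ideal.span_le.mpr ?_
    rintro x ⟨j, rfl⟩
    exact Ideal.subset_span ⟨Fin.castAdd k j, by rw [hc, Fin.append_left]⟩
  have hcb : Ideal.span (Set.range c) ≠ ⊥ := fun h => hIb (le_bot_iff.mp (h ▸ hIc))
  have hcF : ((Ideal.span (Set.range c) : Ideal D) : FractionalIdeal (nonZeroDivisors D) K) ≠ 0 :=
    (FractionalIdeal.coeIdeal_ne_zero' le_rfl).mpr hcb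
  have hr : ∃ r : ℕ, 0 < r ∧ ((I ^ r : Ideal D) : FractionalIdeal (nonZeroDivisors D) K) ≤
      s.star ((Ideal.span (Set.range c) : Ideal D) : FractionalIdeal (nonZeroDivisors D) K) := by
    refine ⟨1, one_pos, ?_⟩
    rw [pow_one]
    exact le_trans ((FractionalIdeal.coeIdeal_le_coeIdeal K).mpr hIc) (s.le_star _ hcF)
  obtain ⟨n, hn, hinvC⟩ := halmost (t + k) c hcP hr
  refine ⟨n, hn, ?_⟩
  set An := Ideal.span (Set.range fun i => a i ^ n) with hAn
  set Bn := Ideal.span (Set.range fun i => b i ^ n) with hBn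
  have hsplit : Ideal.span (Set.range fun i => c i ^ n) = An ⊔ Bn := by
    have hfun : (fun i => c i ^ n) = Fin.append (fun i => a i ^ n) (fun i => b i ^ n) := by
      funext i
      refine Fin.addCases (fun j => ?_) (fun j => ?_) i
      · rw [hc, Fin.append_left, Fin.append_left]
      · rw [hc, Fin.append_right, Fin.append_right]
    rw [hfun]
    apply le_antisymm
    · refine Ideal.span_le.mpr ?_
      rintro x ⟨i, rfl⟩
      refine Fin.addCases (fun j => ?_) (fun j => ?_) i
      · rw [Fin.append_left]
        exact Submodule.mem_sup_left (Ideal.subset_span ⟨j, rfl⟩)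
      · rw [Fin.append_right]
        exact Submodule.mem_sup_right (Ideal.subset_span ⟨j, rfl⟩)
    · refine sup_le ?_ ?_
      · refine Ideal.span_le.mpr ?_
        rintro x ⟨j, rfl⟩
        exact Ideal.subset_span ⟨Fin.castAdd k j, by rw [Fin.append_left]⟩
      · refine Ideal.span_le.mpr ?_
        rintro x ⟨j, rfl⟩
        exact Ideal.subset_span ⟨Fin.natAdd t j, by rw [Fin.append_right]⟩
  rw [hsplit] at hinvC
  set Cn : Ideal D := An ⊔ Bn with hCn
  have hab0 : Ideal.span (Set.range a) ≠ ⊥ := by rw [ha']; exact hIb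
  have hAnb : An ≠ ⊥ := span_pow_ne_bot' hab0 hn
  have hBnb : Bn ≠ ⊥ := span_pow_ne_bot' hBb hn
  have hCnb : Cn ≠ ⊥ := fun h => hAnb (le_bot_iff.mp (h ▸ (le_sup_left : An ≤ Cn)))
  have hAnF : ((An : Ideal D) : FractionalIdeal (nonZeroDivisors D) K) ≠ 0 :=
    (FractionalIdeal.coeIdeal_ne_zero' le_rfl).mpr hAnb
  have hBnF : ((Bn : Ideal D) : FractionalIdeal (nonZeroDivisors D) K) ≠ 0 :=
    (FractionalIdeal.coeIdeal_ne_zero' le_rfl).mpr hBnb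
  have hCnF : ((Cn : Ideal D) : FractionalIdeal (nonZeroDivisors D) K) ≠ 0 :=
    (FractionalIdeal.coeIdeal_ne_zero' le_rfl).mpr hCnb
  have hstarC : s.star ((Cn : FractionalIdeal (nonZeroDivisors D) K) *
      ((Cn : Ideal D) : FractionalIdeal (nonZeroDivisors D) K)⁻¹) = 1 := hinvC
  have hCinv1 : (1 : FractionalIdeal (nonZeroDivisors D) K) ≤
      ((Cn : Ideal D) : FractionalIdeal (nonZeroDivisors D) K)⁻¹ := by
    rw [FractionalIdeal.inv_eq, FractionalIdeal.le_div_iff_mul_le hCnF, one_mul]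
    exact FractionalIdeal.coeIdeal_le_one
  have hCinv0 : ((Cn : Ideal D) : FractionalIdeal (nonZeroDivisors D) K)⁻¹ ≠ 0 := by
    intro h
    have h10 : (1 : FractionalIdeal (nonZeroDivisors D) K) = 0 :=
      le_antisymm (h ▸ hCinv1) (FractionalIdeal.zero_le _)
    have hm1 : (1 : K) ∈ (0 : FractionalIdeal (nonZeroDivisors D) K) := by
      rw [← h10]; exact (FractionalIdeal.mem_one_iff _).mpr ⟨1, map_one _⟩
    rw [FractionalIdeal.mem_zero_iff] at hm1
    exact one_ne_zero hm1
  set E : FractionalIdeal (nonZeroDivisors D) K :=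
    (An : FractionalIdeal (nonZeroDivisors D) K) *
      ((Cn : Ideal D) : FractionalIdeal (nonZeroDivisors D) K)⁻¹ with hE
  set F' : FractionalIdeal (nonZeroDivisors D) K :=
    (Bn : FractionalIdeal (nonZeroDivisors D) K) *
      ((Cn : Ideal D) : FractionalIdeal (nonZeroDivisors D) K)⁻¹ with hF'
  have hE0 : E ≠ 0 := FI.mul_ne_zero hAnF hCinv0
  have hF0 : F' ≠ 0 := FI.mul_ne_zero hBnF hCinv0
  have hEF : E + F' = (Cn : FractionalIdeal (nonZeroDivisors D) K) *
      ((Cn : Ideal D) : FractionalIdeal (nonZeroDivisors D) K)⁻¹ := by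
    rw [hE, hF', ← add_mul, ← FractionalIdeal.coeIdeal_sup, ← hCn]
  have hstarEF : s.star (E + F') = 1 := by rw [hEF]; exact hstarC
  have hCC1 : (Cn : FractionalIdeal (nonZeroDivisors D) K) *
      ((Cn : Ideal D) : FractionalIdeal (nonZeroDivisors D) K)⁻¹ ≤ 1 := by
    rw [FractionalIdeal.inv_eq]
    exact FractionalIdeal.mul_one_div_le_one
  have hL4 : s.star ((I ^ n : Ideal D) : FractionalIdeal (nonZeroDivisors D) K) =
      s.star ((An : Ideal D) : FractionalIdeal (nonZeroDivisors D) K) :=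
    s.star_coeIdeal_pow_eq hIb hIinv ha' hn
  have hInF : ((I ^ n : Ideal D) : FractionalIdeal (nonZeroDivisors D) K) ≠ 0 := by
    rw [FractionalIdeal.coeIdeal_pow]
    exact FI.pow_ne_zero ((FractionalIdeal.coeIdeal_ne_zero' le_rfl).mpr hIb) n
  have hsumb : (I ^ n + Bn : Ideal D) ≠ ⊥ := by
    intro h
    apply hBnb
    refine le_bot_iff.mp (h ▸ ?_)
    rw [Submodule.add_eq_sup]
    exact le_sup_right
  have hsumF : ((I ^ n + Bn : Ideal D) : FractionalIdeal (nonZeroDivisors D) K) ≠ 0 :=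
    (FractionalIdeal.coeIdeal_ne_zero' le_rfl).mpr hsumb
  have hdich : s.star E = 1 ∨ s.star F' = 1 := by
    by_contra hcon
    push_neg at hcon
    obtain ⟨hE1ne, hF1ne⟩ := hcon
    have hEle1 : E ≤ 1 := by
      refine le_trans ?_ hCC1
      exact FractionalIdeal.mul_le.mpr fun i hi j hj =>
        FractionalIdeal.mul_mem_mul
          (((FractionalIdeal.coeIdeal_le_coeIdeal K).mpr (le_sup_left : An ≤ Cn)) hi) hj
    have hFle1 : F' ≤ 1 := by
      refine le_trans ?_ hCC1
      exact FractionalIdeal.mul_le.mpr fun i hi j hj =>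
        FractionalIdeal.mul_mem_mul
          (((FractionalIdeal.coeIdeal_le_coeIdeal K).mpr (le_sup_right : Bn ≤ Cn)) hi) hj
    obtain ⟨QE, hQE, hEQE⟩ := s.exists_isMaxStarIdeal hE0 hEle1 hE1ne
    obtain ⟨QF, hQF, hFQF⟩ := s.exists_isMaxStarIdeal hF0 hFle1 hF1ne
    have hAnE : (An : FractionalIdeal (nonZeroDivisors D) K) ≤ E :=
      calc (An : FractionalIdeal (nonZeroDivisors D) K)
          = (An : FractionalIdeal (nonZeroDivisors D) K) * 1 := (mul_one _).symm
        _ ≤ E := FractionalIdeal.mul_le.mpr fun i hi j hj =>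
            FractionalIdeal.mul_mem_mul hi (hCinv1 hj)
    have hBnF' : (Bn : FractionalIdeal (nonZeroDivisors D) K) ≤ F' :=
      calc (Bn : FractionalIdeal (nonZeroDivisors D) K)
          = (Bn : FractionalIdeal (nonZeroDivisors D) K) * 1 := (mul_one _).symm
        _ ≤ F' := FractionalIdeal.mul_le.mpr fun i hi j hj =>
            FractionalIdeal.mul_mem_mul hi (hCinv1 hj)
    have hAnQE : An ≤ QE :=
      (FractionalIdeal.coeIdeal_le_coeIdeal K).mp (le_trans hAnE hEQE)
    have hBnQF : Bn ≤ QF :=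
      (FractionalIdeal.coeIdeal_le_coeIdeal K).mp (le_trans hBnF' hFQF)
    have hIQE : I ≤ QE := by
      rw [← ha]
      refine Ideal.span_le.mpr ?_
      rintro x ⟨j, rfl⟩
      exact hQE.2.2.1.mem_of_pow_mem n (hAnQE (Ideal.subset_span ⟨j, rfl⟩))
    have hBQF : Ideal.span (Set.range b) ≤ QF := by
      refine Ideal.span_le.mpr ?_
      rintro x ⟨j, rfl⟩
      exact hQF.2.2.1.mem_of_pow_mem n (hBnQF (Ideal.subset_span ⟨j, rfl⟩))
    have hQEP : QE = P := hIuniq QE hQE hIQE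
    have hQFP : QF = P := hBuniq QF hQF hBQF
    have hPle : E + F' ≤ (P : FractionalIdeal (nonZeroDivisors D) K) := by
      rw [← FractionalIdeal.sup_eq_add]
      exact sup_le (hQEP ▸ hEQE) (hQFP ▸ hFQF)
    have hPF : (P : FractionalIdeal (nonZeroDivisors D) K) ≠ 0 :=
      (FractionalIdeal.coeIdeal_ne_zero' le_rfl).mpr hPmax.1
    have hEF0 : E + F' ≠ 0 := by
      rw [hEF]; exact FI.mul_ne_zero hCnF hCinv0
    have hPstar : s.star (P : FractionalIdeal (nonZeroDivisors D) K) =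
        (P : FractionalIdeal (nonZeroDivisors D) K) := hPmax.2.2.2.1
    have hmono := s.star_mono _ _ hEF0 hPF hPle
    rw [hstarEF, hPstar] at hmono
    have h1P : (1 : K) ∈ (P : FractionalIdeal (nonZeroDivisors D) K) :=
      hmono ((FractionalIdeal.mem_one_iff _).mpr ⟨1, map_one _⟩)
    obtain ⟨d, hd, hde⟩ := (FractionalIdeal.mem_coeIdeal _).mp h1P
    rw [← map_one (algebraMap D K)] at hde
    rw [IsFractionRing.injective D K hde] at hd
    exact hPmax.2.1 ((Ideal.eq_top_iff_one P).mpr hd)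
  have hCCne : (Cn : FractionalIdeal (nonZeroDivisors D) K) *
      ((Cn : Ideal D) : FractionalIdeal (nonZeroDivisors D) K)⁻¹ ≠ 0 :=
    FI.mul_ne_zero hCnF hCinv0
  rcases hdich with hEeq | hFeq
  · left
    have hstarCA : s.star ((Cn : Ideal D) : FractionalIdeal (nonZeroDivisors D) K) =
        s.star ((An : Ideal D) : FractionalIdeal (nonZeroDivisors D) K) := by
      have w1 : s.star (E * (Cn : FractionalIdeal (nonZeroDivisors D) K)) =
          s.star ((Cn : Ideal D) : FractionalIdeal (nonZeroDivisors D) K) := by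
        rw [← s.star_mul_left hE0 hCnF, hEeq, one_mul]
      have w2 : s.star (E * (Cn : FractionalIdeal (nonZeroDivisors D) K)) =
          s.star ((An : Ideal D) : FractionalIdeal (nonZeroDivisors D) K) := by
        have he : E * (Cn : FractionalIdeal (nonZeroDivisors D) K) =
            (An : FractionalIdeal (nonZeroDivisors D) K) *
              ((Cn : FractionalIdeal (nonZeroDivisors D) K) *
                ((Cn : Ideal D) : FractionalIdeal (nonZeroDivisors D) K)⁻¹) := by
          rw [hE]; ring
        rw [he, ← s.star_mul_right hAnF hCCne, hstarC, mul_one]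
      rw [← w1, w2]
    have hBle : (Bn : FractionalIdeal (nonZeroDivisors D) K) ≤
        s.star ((I ^ n : Ideal D) : FractionalIdeal (nonZeroDivisors D) K) := by
      rw [hL4, ← hstarCA]
      exact le_trans ((FractionalIdeal.coeIdeal_le_coeIdeal K).mpr (le_sup_right : Bn ≤ Cn))
        (s.le_star _ hCnF)
    apply le_antisymm
    · have hle : ((I ^ n + Bn : Ideal D) : FractionalIdeal (nonZeroDivisors D) K) ≤
          s.star ((I ^ n : Ideal D) : FractionalIdeal (nonZeroDivisors D) K) := by
        rw [Submodule.add_eq_sup, FractionalIdeal.coeIdeal_sup, ← FractionalIdeal.sup_eq_add]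
        exact sup_le (s.le_star _ hInF) hBle
      have hmono := s.star_mono _ _ hsumF (s.star_ne_zero' hInF) hle
      rwa [s.star_star _ hInF] at hmono
    · refine s.star_mono _ _ hInF hsumF ?_
      refine (FractionalIdeal.coeIdeal_le_coeIdeal K).mpr ?_
      rw [Submodule.add_eq_sup]
      exact le_sup_left
  · right
    have hstarCB : s.star ((Cn : Ideal D) : FractionalIdeal (nonZeroDivisors D) K) =
        s.star ((Bn : Ideal D) : FractionalIdeal (nonZeroDivisors D) K) := by
      have w1 : s.star (F' * (Cn : FractionalIdeal (nonZeroDivisors D) K)) =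
          s.star ((Cn : Ideal D) : FractionalIdeal (nonZeroDivisors D) K) := by
        rw [← s.star_mul_left hF0 hCnF, hFeq, one_mul]
      have w2 : s.star (F' * (Cn : FractionalIdeal (nonZeroDivisors D) K)) =
          s.star ((Bn : Ideal D) : FractionalIdeal (nonZeroDivisors D) K) := by
        have he : F' * (Cn : FractionalIdeal (nonZeroDivisors D) K) =
            (Bn : FractionalIdeal (nonZeroDivisors D) K) *
              ((Cn : FractionalIdeal (nonZeroDivisors D) K) *
                ((Cn : Ideal D) : FractionalIdeal (nonZeroDivisors D) K)⁻¹) := by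
          rw [hF']; ring
        rw [he, ← s.star_mul_right hBnF hCCne, hstarC, mul_one]
      rw [← w1, w2]
    have hIle : ((I ^ n : Ideal D) : FractionalIdeal (nonZeroDivisors D) K) ≤
        s.star ((Bn : Ideal D) : FractionalIdeal (nonZeroDivisors D) K) := by
      rw [← hstarCB]
      calc ((I ^ n : Ideal D) : FractionalIdeal (nonZeroDivisors D) K)
          ≤ s.star ((I ^ n : Ideal D) : FractionalIdeal (nonZeroDivisors D) K) :=
            s.le_star _ hInF
        _ = s.star ((An : Ideal D) : FractionalIdeal (nonZeroDivisors D) K) := hL4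
        _ ≤ s.star ((Cn : Ideal D) : FractionalIdeal (nonZeroDivisors D) K) :=
            s.star_mono _ _ hAnF hCnF
              ((FractionalIdeal.coeIdeal_le_coeIdeal K).mpr (le_sup_left : An ≤ Cn))
    apply le_antisymm
    · have hle : ((I ^ n + Bn : Ideal D) : FractionalIdeal (nonZeroDivisors D) K) ≤
          s.star ((Bn : Ideal D) : FractionalIdeal (nonZeroDivisors D) K) := by
        rw [Submodule.add_eq_sup, FractionalIdeal.coeIdeal_sup, ← FractionalIdeal.sup_eq_add]
        exact sup_le hIle (s.le_star _ hBnF)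
      have hmono := s.star_mono _ _ hsumF (s.star_ne_zero' hBnF) hle
      rwa [s.star_star _ hBnF] at hmono
    · refine s.star_mono _ _ hBnF hsumF ?_
      refine (FractionalIdeal.coeIdeal_le_coeIdeal K).mpr ?_
      rw [Submodule.add_eq_sup]
      exact le_sup_right
end
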